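/- Let Q be a conjunctive query whose join graph is connected and whose head contains at least one variable that occurs in some atom of Q's body. If Q is full-lineage consistent with respect to a pair (I,O) — there is at least one assignment of Q on I producing O, and every tuple of I is used by some assignment of Q on I producing O — then the provenance graph of (I,O) is connected. -/

import Mathlib

/-- A database tuple: a relation name together with a finite sequence of constants. -/
structure Tup (R C : Type) where
  rel : R
  consts : List C

/-- A relational atom: a relation name together with a finite sequence of variables. -/
structure Atom (R V : Type) where
  rel : R
  vars : List V

/-- A conjunctive query: a head (finite sequence of variables) and a body,
a finite indexed family of relational atoms. -/
structure CQ (R V : Type) where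
  n : ℕ
  head : List V
  body : Fin n → Atom R V

variable {R V C : Type}

/-- An assignment of `Q` on a set of tuples `I`: it maps each atom of the body to a tuple
of `I` with the same relation name and the same arity, such that whenever two atom
positions hold the same variable, the assigned tuples hold the same constant there. -/
def IsAssignment (Q : CQ R V) (I : Set (Tup R C)) (a : Fin Q.n → Tup R C) : Prop :=
  (∀ k, a k ∈ I) ∧
  (∀ k, (a k).rel = (Q.body k).rel) ∧
  (∀ k, (a k).consts.length = (Q.body k).vars.length) ∧
  (∀ k k' i i' (v : V), (Q.body k).vars[(i : ℕ)]? = some v →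
    (Q.body k').vars[(i' : ℕ)]? = some v →
    (a k).consts[(i : ℕ)]? = (a k').consts[(i' : ℕ)]?)

/-- The assignment `a` produces the output tuple `O`: for every head variable at head
position `j`, wherever it occurs at position `i` of an atom, the constant at position `i`
of the assigned tuple equals the constant of `O` at position `j`. -/
def Produces (Q : CQ R V) (a : Fin Q.n → Tup R C) (O : List C) : Prop :=
  ∀ j i k (v : V), Q.head[(j : ℕ)]? = some v → (Q.body k).vars[(i : ℕ)]? = some v →
    (a k).consts[(i : ℕ)]? = O[(j : ℕ)]?

/-- `Q` is full-lineage consistent w.r.t. `(I, O)`: some assignment of `Q` on `I`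
produces `O`, and every tuple of `I` is used by some assignment of `Q` on `I`
producing `O`. -/
def FullLineageConsistent (Q : CQ R V) (I : Set (Tup R C)) (O : List C) : Prop :=
  (∃ a : Fin Q.n → Tup R C, IsAssignment Q I a ∧ Produces Q a O) ∧
  (∀ t ∈ I, ∃ a : Fin Q.n → Tup R C,
    IsAssignment Q I a ∧ Produces Q a O ∧ ∃ k, a k = t)

/-- Edge relation of the join graph of `Q`: two atoms are joined whenever they share a
variable (including a self-loop on an atom in which some variable occurs at two distinct
positions). -/
def JoinEdge (Q : CQ R V) (k k' : Fin Q.n) : Prop :=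
  ∃ (i : ℕ) (i' : ℕ) (v : V), (Q.body k).vars[(i : ℕ)]? = some v ∧ (Q.body k').vars[(i' : ℕ)]? = some v ∧
    (k ≠ k' ∨ i ≠ i')

/-- Edge relation of the provenance graph: two tuples are joined whenever they share a
constant (including a self-loop on a tuple in which some constant occurs at two distinct
positions). -/
def ProvEdge (t t' : Tup R C) : Prop :=
  ∃ (i : ℕ) (i' : ℕ) (c : C), t.consts[(i : ℕ)]? = some c ∧ t'.consts[(i' : ℕ)]? = some c ∧
    (t ≠ t' ∨ i ≠ i')

/-- A homomorphism from the join graph of `Q` to the provenance graph of `(I, O)`: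
(1) edges are mapped to edges, and in particular shared variables are mapped to shared
constants at the same positions; (2) relation names are preserved; (3) positions holding
head variables are mapped to the corresponding constants of `O`. -/
def IsHom (Q : CQ R V) (I : Set (Tup R C)) (O : List C)
    (h : Fin Q.n → Tup R C) : Prop :=
  (∀ k, h k ∈ I) ∧
  (∀ k k', JoinEdge Q k k' → ProvEdge (h k) (h k')) ∧
  (∀ k k' i i' (v : V), (Q.body k).vars[(i : ℕ)]? = some v →
    (Q.body k').vars[(i' : ℕ)]? = some v →
    (h k).consts[(i : ℕ)]? = (h k').consts[(i' : ℕ)]?) ∧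
  (∀ k, (h k).rel = (Q.body k).rel) ∧
  (∀ k i j (v : V), (Q.body k).vars[(i : ℕ)]? = some v → Q.head[(j : ℕ)]? = some v →
    (h k).consts[(i : ℕ)]? = O[(j : ℕ)]?)

/-- A set `H` of homomorphisms covers the provenance graph of `(I, O)`:
the union of the images `h[V_J]` over `h ∈ H` equals the node set `I`. -/
def Covers (Q : CQ R V) (I : Set (Tup R C)) (H : Set (Fin Q.n → Tup R C)) : Prop :=
  (⋃ h ∈ H, Set.range h) = I

/-- A conjunctive query is connected if its join graph is connected: every two nodes
(atoms of the body) are linked by a path of join-graph edges. -/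
def JoinConnected (Q : CQ R V) : Prop :=
  ∀ k k' : Fin Q.n, Relation.ReflTransGen (JoinEdge Q) k k'

/-- The provenance graph of `(I, O)` is connected: every two tuples of `I` are linked
by a path of provenance-graph edges going through tuples of `I`. -/
def ProvConnected (I : Set (Tup R C)) : Prop :=
  ∀ t ∈ I, ∀ t' ∈ I,
    Relation.ReflTransGen (fun a b => a ∈ I ∧ b ∈ I ∧ ProvEdge a b) t t'

lemma consts_get_some {Q : CQ R V} {I : Set (Tup R C)} {a : Fin Q.n → Tup R C}
    (ha : IsAssignment Q I a) (k : Fin Q.n) {i : ℕ} {v : V}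
    (hv : (Q.body k).vars[i]? = some v) : ∃ c, (a k).consts[i]? = some c := by
  have hlen : i < (a k).consts.length := by
    rw [ha.2.2.1 k]
    exact (List.getElem?_eq_some_iff.mp hv).1
  exact ⟨(a k).consts[i], List.getElem?_eq_getElem hlen⟩

lemma assign_path {Q : CQ R V} {I : Set (Tup R C)} {a : Fin Q.n → Tup R C}
    (ha : IsAssignment Q I a) (hconn : JoinConnected Q) (k k' : Fin Q.n) :
    Relation.ReflTransGen (fun x y => x ∈ I ∧ y ∈ I ∧ ProvEdge x y) (a k) (a k') := by
  have h := hconn k k'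
  induction h with
  | refl => exact Relation.ReflTransGen.refl
  | tail _ e ih =>
    rename_i m m' _
    by_cases heq : a m = a m'
    · exact heq ▸ ih
    · obtain ⟨i, i', v, h1, h2, _⟩ := e
      obtain ⟨c, hc⟩ := consts_get_some ha m h1
      have hcc : (a m).consts[i]? = (a m').consts[i']? := ha.2.2.2 m m' i i' v h1 h2
      exact ih.tail ⟨ha.1 m, ha.1 m', i, i', c, hc, hcc ▸ hc, Or.inl heq⟩

/-- If `Q` has a connected join graph, its head contains a variable
occurring in some body atom, and `Q` is full-lineage consistent w.r.t. `(I, O)`, then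
the provenance graph of `(I, O)` is connected. -/
theorem prov_graph_connected_of_full_lineage_consistent
    (Q : CQ R V) (I : Set (Tup R C)) (O : List C)
    (hconn : JoinConnected Q)
    (hhead : ∃ (j : ℕ) (v : V) (k : Fin Q.n) (i : ℕ),
      Q.head[(j : ℕ)]? = some v ∧ (Q.body k).vars[(i : ℕ)]? = some v)
    (hcons : FullLineageConsistent Q I O) :
    ProvConnected I := by
  obtain ⟨j, v, k0, i0, hj, hi0⟩ := hhead
  obtain ⟨_, hall⟩ := hcons
  intro t ht t' ht'
  obtain ⟨a, ha, hpa, k, hak⟩ := hall t ht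
  obtain ⟨b, hb, hpb, k', hbk⟩ := hall t' ht'
  have p1 : Relation.ReflTransGen (fun x y => x ∈ I ∧ y ∈ I ∧ ProvEdge x y) t (a k0) :=
    hak ▸ assign_path ha hconn k k0
  have p3 : Relation.ReflTransGen (fun x y => x ∈ I ∧ y ∈ I ∧ ProvEdge x y) (b k0) t' :=
    hbk ▸ assign_path hb hconn k0 k'
  have p2 : Relation.ReflTransGen (fun x y => x ∈ I ∧ y ∈ I ∧ ProvEdge x y) (a k0) (b k0) := by
    by_cases heq : a k0 = b k0
    · exact heq ▸ Relation.ReflTransGen.refl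
    · obtain ⟨c, hc⟩ := consts_get_some ha k0 hi0
      have h1 : (a k0).consts[i0]? = O[j]? := hpa j i0 k0 v hj hi0
      have h2 : (b k0).consts[i0]? = O[j]? := hpb j i0 k0 v hj hi0
      refine Relation.ReflTransGen.single ⟨ha.1 k0, hb.1 k0, i0, i0, c, hc, ?_, Or.inl heq⟩
      rw [h2, ← h1, hc]
  exact (p1.trans p2).trans p3
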